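/- Let H be a vertex-minimal finite simple graph with θ(H) ≤ 8 and χ'_s(H) > 20. Then no 4-vertex of H is adjacent to four 3-vertices. -/

import Mathlib

open SimpleGraph

variable {V : Type*}

/-- Two edges are at distance at most 2 (they "see" each other): distinct and
some endpoint of one equals or is adjacent to some endpoint of the other. -/
def EdgeSees (G : SimpleGraph V) (e e' : Sym2 V) : Prop :=
  e ≠ e' ∧ ∃ a ∈ e, ∃ b ∈ e', a = b ∨ G.Adj a b

/-- `G` admits a strong `N`-edge-coloring. -/
def HasStrongColoring (G : SimpleGraph V) (N : ℕ) : Prop :=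
  ∃ f : G.edgeSet → Fin N, ∀ e e' : G.edgeSet, EdgeSees G e.val e'.val → f e ≠ f e'

/-- `G − v`: delete the vertex `v` (remove all edges incident to it). -/
def DelV (G : SimpleGraph V) (v : V) : SimpleGraph V where
  Adj a b := G.Adj a b ∧ a ≠ v ∧ b ≠ v
  symm := ⟨fun _ _ h => ⟨h.1.symm, h.2.2, h.2.1⟩⟩
  loopless := ⟨fun a h => G.ne_of_adj h.1 rfl⟩

lemma edgeSees_symm {G : SimpleGraph V} {e e' : Sym2 V} (h : EdgeSees G e e') :
    EdgeSees G e' e := by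
  obtain ⟨hne, a, ha, b, hb, hab⟩ := h
  exact ⟨hne.symm, b, hb, a, ha, hab.imp Eq.symm Adj.symm⟩

/-- Greedy coloring lemma. -/
lemma greedy {α : Type*} {N k : ℕ} (hN : 0 < N) (s : Finset α)
    (A : α → Finset (Fin N)) (hA : ∀ a ∈ s, (A a).card ≤ k)
    (hcard : s.card + k ≤ N) :
    ∃ c : α → Fin N, Set.InjOn c ↑s ∧ ∀ a ∈ s, c a ∉ A a := by
  classical
  induction s using Finset.induction_on with
  | empty => exact ⟨fun _ => ⟨0, hN⟩, by simp [Set.InjOn], by simp⟩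
  | @insert a s ha ih =>
    obtain ⟨c, hinj, hc⟩ := ih (fun b hb => hA b (Finset.mem_insert_of_mem hb))
      (by rw [Finset.card_insert_of_notMem ha] at hcard; omega)
    have hcardins := hcard
    rw [Finset.card_insert_of_notMem ha] at hcardins
    set F : Finset (Fin N) := A a ∪ s.image c with hF
    have hFcard : F.card < N := by
      calc F.card ≤ (A a).card + (s.image c).card := Finset.card_union_le _ _
        _ ≤ k + s.card := by
            have h1 := hA a (Finset.mem_insert_self a s)
            have h2 := Finset.card_image_le (s := s) (f := c)
            omega
        _ < N := by omega
    have hex : ∃ col : Fin N, col ∉ F := by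
      have : (Fᶜ).Nonempty := by
        rw [← Finset.card_pos, Finset.card_compl]
        simp only [Fintype.card_fin]
        omega
      obtain ⟨col, hcol⟩ := this
      exact ⟨col, Finset.mem_compl.mp hcol⟩
    obtain ⟨col, hcol⟩ := hex
    have hcolA : col ∉ A a := fun h => hcol (Finset.mem_union_left _ h)
    have hcolim : col ∉ s.image c := fun h => hcol (Finset.mem_union_right _ h)
    refine ⟨Function.update c a col, ?_, ?_⟩
    · intro u hu v hv huv
      simp only [Finset.coe_insert, Set.mem_insert_iff, Finset.mem_coe] at hu hv
      rcases hu with rfl | hu <;> rcases hv with rfl | hv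
      · rfl
      · exfalso
        rw [Function.update_self, Function.update_of_ne (ne_of_mem_of_not_mem hv ha)] at huv
        exact hcolim (Finset.mem_image.mpr ⟨v, hv, huv.symm⟩)
      · exfalso
        rw [Function.update_self, Function.update_of_ne (ne_of_mem_of_not_mem hu ha)] at huv
        exact hcolim (Finset.mem_image.mpr ⟨u, hu, huv⟩)
      · rw [Function.update_of_ne (ne_of_mem_of_not_mem hu ha),
          Function.update_of_ne (ne_of_mem_of_not_mem hv ha)] at huv
        exact hinj hu hv huv
    · intro b hb
      rcases Finset.mem_insert.mp hb with rfl | hb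
      · rw [Function.update_self]; exact hcolA
      · rw [Function.update_of_ne (ne_of_mem_of_not_mem hb ha)]; exact hc b hb

lemma delv_ne {H : SimpleGraph V} {x : V} {e : Sym2 V}
    (he : e ∈ (DelV H x).edgeSet) : ∀ a ∈ e, a ≠ x := by
  induction e using Sym2.ind with
  | _ u v =>
    rw [SimpleGraph.mem_edgeSet] at he
    intro a ha
    rcases Sym2.mem_iff.mp ha with rfl | rfl
    · exact he.2.1
    · exact he.2.2

lemma delv_mem {H : SimpleGraph V} {x : V} {e : Sym2 V}
    (he : e ∈ H.edgeSet) (hx : x ∉ e) : e ∈ (DelV H x).edgeSet := by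
  induction e using Sym2.ind with
  | _ u v =>
    rw [SimpleGraph.mem_edgeSet] at he ⊢
    exact ⟨he, fun h => hx (h ▸ Sym2.mem_mk_left u v),
      fun h => hx (h ▸ Sym2.mem_mk_right u v)⟩

/-- θ ≤ 8, χ'ₛ > 20: no 4-vertex is adjacent to four 3-vertices, i.e. no
4-vertex has all its neighbors of degree 3. -/
theorem stmt9 [Fintype V] (H : SimpleGraph V) [DecidableRel H.Adj]
    (hore : ∀ u w, H.Adj u w → H.degree u + H.degree w ≤ 8)
    (hnc : ¬ HasStrongColoring H 20)
    (hmin : ∀ v, HasStrongColoring (DelV H v) 20) :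
    ¬ ∃ x, H.degree x = 4 ∧ ∀ y, H.Adj x y → H.degree y = 3 := by
  classical
  rintro ⟨x, hdeg, hnbr⟩
  set G := DelV H x with hG
  have hminx := hmin x
  rw [← hG] at hminx
  obtain ⟨f, hf⟩ := hminx
  -- the set of already-colored edges seeing a given edge
  let S : Sym2 V → Finset (Sym2 V) := fun e => G.edgeFinset.filter (fun e' => EdgeSees H e e')
  have hSsub : ∀ e e', e' ∈ S e → e' ∈ G.edgeSet := by
    intro e e' h
    rw [Finset.mem_filter, mem_edgeFinset] at h
    exact h.1
  let A : Sym2 V → Finset (Fin 20) := fun e =>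
    (S e).attach.image (fun q => f ⟨q.1, hSsub e q.1 q.2⟩)
  -- membership in A
  have hAmem : ∀ (e : Sym2 V) (e' : G.edgeSet), EdgeSees H e e'.1 → f e' ∈ A e := by
    intro e e' hsee
    have h1 : e'.1 ∈ S e := by
      rw [Finset.mem_filter, mem_edgeFinset]
      exact ⟨e'.2, hsee⟩
    have : f ⟨(⟨e'.1, h1⟩ : {z // z ∈ S e}).1, hSsub e e'.1 h1⟩ ∈ A e :=
      Finset.mem_image.mpr ⟨⟨e'.1, h1⟩, Finset.mem_attach _ _, rfl⟩
    convert this using 2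
  -- degree bounds in G
  have hGdeg : ∀ z, G.degree z ≤ H.degree z := by
    intro z
    apply Finset.card_le_card
    intro w hw
    rw [mem_neighborFinset] at hw ⊢
    exact hw.1
  have hGdeg' : ∀ z, H.Adj z x → G.degree z ≤ H.degree z - 1 := by
    intro z hzx
    have hsub : G.neighborFinset z ⊆ (H.neighborFinset z).erase x := by
      intro w hw
      rw [mem_neighborFinset] at hw
      exact Finset.mem_erase.mpr ⟨hw.2.2, (mem_neighborFinset _ _ _).mpr hw.1⟩
    calc G.degree z ≤ ((H.neighborFinset z).erase x).card := Finset.card_le_card hsub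
      _ = H.degree z - 1 := by
          rw [Finset.card_erase_of_mem ((mem_neighborFinset _ _ _).mpr hzx)]
          rfl
  -- key counting lemma
  have hScard : ∀ y, H.Adj x y → (S s(x,y)).card ≤ 16 := by
    intro y hxy
    have hdy : H.degree y = 3 := hnbr y hxy
    set B1 : Finset (Sym2 V) := (H.neighborFinset x).biUnion (fun z => G.incidenceFinset z)
      with hB1
    set B2 : Finset (Sym2 V) :=
      ((H.neighborFinset y).erase x).biUnion (fun z => (G.incidenceFinset z).erase s(y,z))
      with hB2
    have hsub : S s(x,y) ⊆ B1 ∪ B2 := by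
      intro e' he'
      rw [Finset.mem_filter, mem_edgeFinset] at he'
      obtain ⟨heG, hne, a, ha, b, hb, hab⟩ := he'
      have hbx : b ≠ x := delv_ne heG b hb
      have hinc : ∀ z, H.Adj x z → b = z ∨ z ∈ e' → e' ∈ B1 ∪ B2 := by
        intro z hz hmem
        apply Finset.mem_union_left
        refine Finset.mem_biUnion.mpr ⟨z, (mem_neighborFinset _ _ _).mpr hz, ?_⟩
        rw [mem_incidenceFinset]
        rcases hmem with rfl | hmem
        · exact ⟨heG, hb⟩
        · exact ⟨heG, hmem⟩
      rcases Sym2.mem_iff.mp ha with ha' | ha'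
      · -- a = x
        rw [ha'] at hab
        rcases hab with rfl | hab
        · exact absurd rfl hbx
        · exact hinc b hab (Or.inl rfl)
      · -- a = y
        rw [ha'] at hab
        rcases hab with rfl | hab
        · exact hinc y hxy (Or.inr hb)
        · by_cases hye : (y : V) ∈ e'
          · exact hinc y hxy (Or.inr hye)
          · apply Finset.mem_union_right
            refine Finset.mem_biUnion.mpr ⟨b, Finset.mem_erase.mpr ⟨hbx,
              (mem_neighborFinset _ _ _).mpr hab⟩, ?_⟩
            refine Finset.mem_erase.mpr ⟨?_, ?_⟩
            · intro h; exact hye (h ▸ Sym2.mem_mk_left y b)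
            · rw [mem_incidenceFinset]; exact ⟨heG, hb⟩
    have hc1 : B1.card ≤ 8 := by
      calc B1.card ≤ ∑ z ∈ H.neighborFinset x, (G.incidenceFinset z).card :=
            Finset.card_biUnion_le
        _ ≤ (H.neighborFinset x).card • 2 := by
            apply Finset.sum_le_card_nsmul
            intro z hz
            rw [mem_neighborFinset] at hz
            rw [card_incidenceFinset_eq_degree]
            have := hGdeg' z hz.symm
            rw [hnbr z hz] at this
            omega
        _ = 8 := by rw [card_neighborFinset_eq_degree, hdeg]; rfl
    have hc2 : B2.card ≤ 8 := by
      calc B2.card ≤ ∑ z ∈ (H.neighborFinset y).erase x,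
            ((G.incidenceFinset z).erase s(y,z)).card := Finset.card_biUnion_le
        _ ≤ ((H.neighborFinset y).erase x).card • 4 := by
            apply Finset.sum_le_card_nsmul
            intro z hz
            obtain ⟨hzx, hz⟩ := Finset.mem_erase.mp hz
            rw [mem_neighborFinset] at hz
            have hyz : G.Adj y z := ⟨hz, (H.ne_of_adj hxy).symm, hzx⟩
            have hmem : s(y,z) ∈ G.incidenceFinset z := by
              rw [mem_incidenceFinset]
              exact ⟨(mem_edgeSet G).mpr hyz, Sym2.mem_mk_right y z⟩
            rw [Finset.card_erase_of_mem hmem, card_incidenceFinset_eq_degree]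
            have h1 : G.degree z ≤ H.degree z := hGdeg z
            have h2 := hore y z hz
            rw [hdy] at h2
            omega
        _ ≤ 8 := by
            have : ((H.neighborFinset y).erase x).card = 2 := by
              rw [Finset.card_erase_of_mem ((mem_neighborFinset _ _ _).mpr hxy.symm),
                card_neighborFinset_eq_degree, hdy]
            rw [this]; norm_num
    calc (S s(x,y)).card ≤ (B1 ∪ B2).card := Finset.card_le_card hsub
      _ ≤ B1.card + B2.card := Finset.card_union_le _ _
      _ ≤ 16 := by omega
  have hAcard : ∀ e ∈ H.incidenceFinset x, (A e).card ≤ 16 := by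
    intro e he
    rw [mem_incidenceFinset] at he
    obtain ⟨heE, hxe⟩ := he
    obtain ⟨y, rfl⟩ := Sym2.mem_iff_exists.mp hxe
    have hxy : H.Adj x y := (mem_edgeSet H).mp heE
    calc (A s(x,y)).card ≤ (S s(x,y)).attach.card := Finset.card_image_le
      _ = (S s(x,y)).card := Finset.card_attach
      _ ≤ 16 := hScard y hxy
  obtain ⟨c, hinj, hcA⟩ := greedy (by norm_num) (H.incidenceFinset x) A hAcard
    (by rw [card_incidenceFinset_eq_degree, hdeg])
  -- extend the coloring
  apply hnc
  refine ⟨fun p => if h : x ∈ p.1 then c p.1 else f ⟨p.1, delv_mem p.2 h⟩, ?_⟩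
  intro e e' hsee
  have hmemInc : ∀ (q : H.edgeSet), x ∈ q.1 → q.1 ∈ H.incidenceFinset x := by
    intro q hq
    rw [mem_incidenceFinset]
    exact ⟨q.2, hq⟩
  by_cases h1 : x ∈ e.1 <;> by_cases h2 : x ∈ e'.1
  · simp only [dif_pos h1, dif_pos h2]
    intro heq
    exact hsee.1 (hinj (hmemInc e h1) (hmemInc e' h2) heq)
  · simp only [dif_pos h1, dif_neg h2]
    intro heq
    exact hcA e.1 (hmemInc e h1) (heq ▸ hAmem e.1 ⟨e'.1, delv_mem e'.2 h2⟩ hsee)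
  · simp only [dif_neg h1, dif_pos h2]
    intro heq
    exact hcA e'.1 (hmemInc e' h2)
      (heq ▸ hAmem e'.1 ⟨e.1, delv_mem e.2 h1⟩ (edgeSees_symm hsee))
  · simp only [dif_neg h1, dif_neg h2]
    apply hf
    obtain ⟨hne, a, ha, b, hb, hab⟩ := hsee
    refine ⟨hne, a, ha, b, hb, ?_⟩
    rcases hab with rfl | hab
    · exact Or.inl rfl
    · exact Or.inr ⟨hab, delv_ne (delv_mem e.2 h1) a ha, delv_ne (delv_mem e'.2 h2) b hb⟩
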